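/- The least upper bound of any strictly increasing sequence of finite partial evaluation trees is an infinite well-formed partial evaluation tree; conversely, every well-formed infinite partial evaluation tree is the least upper bound of some strictly increasing sequence of finite partial evaluation trees. -/

import Mathlib

/-- Judgements over configurations `C` and extended results `Option R`
    (`none` stands for the special extra result such as `?`, `wrong`, or `∞`). -/
abbrev Judg (C R : Type) := C × Option R

/-- Lift a complete judgement to an extended judgement. -/
def liftJ {C R : Type} (j : C × R) : Judg C R := (j.1, some j.2)

/-- Bounded-premises condition. -/
def BP {C R : Type} (Rules : Set (List (C × R) × (C × R))) : Prop :=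
  ∀ c : C, ∃ b : ℕ, ∀ js res, (js, (c, res)) ∈ Rules → js.length ≤ b

/-- The extended rule set `Rules_?`: original rules (lifted), start axioms
    `c ⇒ ?`, and partial rules. -/
def RulesQ {C R : Type} (Rules : Set (List (C × R) × (C × R))) :
    Set (List (Judg C R) × Judg C R) :=
  { r | (∃ c : C, r = ([], (c, none)))
      ∨ (∃ (js : List (C × R)) (c : C) (res : R), (js, (c, res)) ∈ Rules ∧ r = (js.map liftJ, (c, some res)))
      ∨ (∃ (js : List (C × R)) (c : C) (res : R) (i : ℕ) (hi : i < js.length) (u : Option R),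
          (js, (c, res)) ∈ Rules ∧
          r = ((js.take i).map liftJ ++ [((js[i]'hi).1, u)], (c, none))) }

/-- Ordered trees labelled in `L`: partial functions from positions (lists of
    child indices) to labels, with nonempty, prefix-closed,
    sibling-downward-closed domain. -/
structure OTree (L : Type) where
  label : List ℕ → Option L
  root_isSome : (label []).isSome
  pref : ∀ α n, (label (α ++ [n])).isSome → (label α).isSome
  sib : ∀ α n k, (label (α ++ [n])).isSome → k ≤ n → (label (α ++ [k])).isSome

/-- A tree is an evaluation tree in a rule set: at every node, the ordered
    children labels together with the node label form a rule. -/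
def IsTreeIn {L : Type} (Rules : Set (List L × L)) (t : OTree L) : Prop :=
  ∀ α l, t.label α = some l →
    ∃ ps : List L, (∀ i : ℕ, t.label (α ++ [i]) = ps[i]?) ∧ (ps, l) ∈ Rules

/-- Partial evaluation trees: evaluation trees in `Rules_?`. -/
def IsPET {C R : Type} (Rules : Set (List (C × R) × (C × R)))
    (t : OTree (Judg C R)) : Prop :=
  IsTreeIn (RulesQ Rules) t

/-- The refinement relation `⊑` on trees labelled by possibly-incomplete
    judgements. -/
def TreeLE {C R : Type} (t t' : OTree (Judg C R)) : Prop :=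
  (∀ α, (t.label α).isSome → (t'.label α).isSome) ∧
  ∀ α c u, t.label α = some (c, u) →
    (∃ (u' : Option R), t'.label α = some (c, u')) ∧
    (u.isSome → ∀ β, t.label (α ++ β) = t'.label (α ++ β))

/-- Strict refinement `⊏`. -/
def TreeLT {C R : Type} (t t' : OTree (Judg C R)) : Prop :=
  TreeLE t t' ∧ t ≠ t'

/-- A tree is finite if its domain is finite. -/
def TreeFinite {L : Type} (t : OTree L) : Prop :=
  Set.Finite {α | (t.label α).isSome}

/-- Well-formedness: every subtree rooted at a complete node is finite. -/
def WellFormed {C R : Type} (t : OTree (Judg C R)) : Prop :=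
  ∀ α c r, t.label α = some (c, some r) →
    Set.Finite {β | (t.label (α ++ β)).isSome}

/-- `t` is a least upper bound of the sequence `f` w.r.t. `⊑`. -/
def IsLubSeq {C R : Type} (f : ℕ → OTree (Judg C R)) (t : OTree (Judg C R)) : Prop :=
  (∀ n, TreeLE (f n) t) ∧ ∀ t', (∀ n, TreeLE (f n) t') → TreeLE t t'

/-- Inductive derivability in a rule set with finite-list premises. -/
inductive IndDerives {J : Type} (Rules : Set (List J × J)) : J → Prop where
  | node (ps : List J) (j : J) : (ps, j) ∈ Rules →
      (∀ p ∈ ps, IndDerives Rules p) → IndDerives Rules j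

/-- A set of judgements is consistent w.r.t. a rule set. -/
def ConsistentL {J : Type} (Rules : Set (List J × J)) (X : Set J) : Prop :=
  ∀ j ∈ X, ∃ (ps : List J), (ps, j) ∈ Rules ∧ ∀ p ∈ ps, p ∈ X

/-- Coinductive derivability: membership in some consistent set. -/
def CoDerives {J : Type} (Rules : Set (List J × J)) (j : J) : Prop :=
  ∃ (X : Set J), ConsistentL Rules X ∧ j ∈ X

/-- Derivability in a generalised inference system (rules + corules):
    membership in a consistent set all of whose elements have a finite
    derivation using both rules and corules. -/
def GenDerives {J : Type} (rules corules : Set (List J × J)) (j : J) : Prop :=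
  ∃ (X : Set J), ConsistentL rules X ∧ (∀ x ∈ X, IndDerives (rules ∪ corules) x) ∧ j ∈ X
section Basic
variable {C R : Type}

lemma OTree.ext' {L : Type} {t t' : OTree L} (h : t.label = t'.label) : t = t' := by
  cases t; cases t'; simp_all

lemma TreeLE.refl (t : OTree (Judg C R)) : TreeLE t t :=
  ⟨fun _ h => h, fun _ _ _ h => ⟨⟨_, h⟩, fun _ _ => rfl⟩⟩

lemma TreeLE.trans {t₁ t₂ t₃ : OTree (Judg C R)} (h12 : TreeLE t₁ t₂) (h23 : TreeLE t₂ t₃) :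
    TreeLE t₁ t₃ := by
  refine ⟨fun α h => h23.1 α (h12.1 α h), fun α c u h => ?_⟩
  obtain ⟨⟨u₁, h2⟩, hfr⟩ := h12.2 α c u h
  obtain ⟨⟨u₂, h3⟩, hfr2⟩ := h23.2 α c u₁ h2
  refine ⟨⟨u₂, h3⟩, fun hu β => ?_⟩
  have e1 := hfr hu β
  have e : u = u₁ := by
    have e := hfr hu []; simp only [List.append_nil] at e; rw [h, h2] at e; simp_all
  exact e1.trans (hfr2 (e ▸ hu) β)

lemma TreeLE.antisymm {t₁ t₂ : OTree (Judg C R)} (h12 : TreeLE t₁ t₂) (h21 : TreeLE t₂ t₁) :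
    t₁ = t₂ := by
  apply OTree.ext'
  funext α
  cases h1 : t₁.label α with
  | none =>
    cases h2 : t₂.label α with
    | none => rfl
    | some j =>
      have := h21.1 α (by simp [h2])
      rw [h1] at this; simp at this
  | some j =>
    obtain ⟨c, u⟩ := j
    obtain ⟨⟨u', h2⟩, hfr⟩ := h12.2 α c u h1
    cases u with
    | some r => have := hfr (by simp) []; simp at this; rw [h1, h2] at this; simp_all
    | none =>
      cases u' with
      | none => rw [h2]
      | some r' =>
        obtain ⟨_, hfr2⟩ := h21.2 α c (some r') h2
        have := hfr2 (by simp) []; simp at this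
        rw [h1, h2] at this; simp_all

lemma chain_le {f : ℕ → OTree (Judg C R)} (hch : ∀ n, TreeLE (f n) (f (n + 1)))
    {m n : ℕ} (h : m ≤ n) : TreeLE (f m) (f n) := by
  induction n with
  | zero => simp_all; exact h ▸ TreeLE.refl _
  | succ k ih =>
    rcases Nat.lt_or_ge m (k+1) with h' | h'
    · exact (ih (Nat.lt_succ_iff.mp h')).trans (hch k)
    · have : m = k + 1 := le_antisymm h h'
      exact this ▸ TreeLE.refl _

lemma config_stable {f : ℕ → OTree (Judg C R)} (hch : ∀ n, TreeLE (f n) (f (n + 1)))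
    {m n : ℕ} {α : List ℕ} {c c' : C} {u u' : Option R}
    (hm : (f m).label α = some (c, u)) (hn : (f n).label α = some (c', u')) : c = c' := by
  rcases le_total m n with h | h
  · obtain ⟨⟨u₂, h2⟩, _⟩ := (chain_le hch h).2 α c u hm
    rw [hn] at h2; simp_all
  · obtain ⟨⟨u₂, h2⟩, _⟩ := (chain_le hch h).2 α c' u' hn
    rw [hm] at h2; simp_all

lemma frozen_ge {f : ℕ → OTree (Judg C R)} (hch : ∀ n, TreeLE (f n) (f (n + 1)))
    {m n : ℕ} {α : List ℕ} {c : C} {r : R}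
    (h : m ≤ n) (hm : (f m).label α = some (c, some r)) (β : List ℕ) :
    (f n).label (α ++ β) = (f m).label (α ++ β) :=
  (((chain_le hch h).2 α c (some r) hm).2 (by simp) β).symm

end Basic
section Limit
variable {C R : Type}

def EverComplete (f : ℕ → OTree (Judg C R)) (α : List ℕ) : Prop :=
  ∃ n j, (f n).label α = some j ∧ j.2.isSome

def EverDefined (f : ℕ → OTree (Judg C R)) (α : List ℕ) : Prop :=
  ∃ n, ((f n).label α).isSome

open Classical in
noncomputable def limitLabel (f : ℕ → OTree (Judg C R)) (α : List ℕ) : Option (Judg C R) :=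
  if h2 : EverComplete f α then (f h2.choose).label α
  else if h : EverDefined f α then (f h.choose).label α
  else none

variable {f : ℕ → OTree (Judg C R)} (hch : ∀ n, TreeLE (f n) (f (n + 1)))
include hch

lemma limitLabel_complete {n : ℕ} {α : List ℕ} {c : C} {r : R}
    (hn : (f n).label α = some (c, some r)) : limitLabel f α = some (c, some r) := by
  have h2 : EverComplete f α := ⟨n, (c, some r), hn, rfl⟩
  rw [limitLabel, dif_pos h2]
  obtain ⟨⟨c', u'⟩, hj', hj2⟩ := h2.choose_spec
  obtain ⟨r', rfl⟩ := Option.isSome_iff_exists.mp hj2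
  have e1 := frozen_ge hch (le_max_left n h2.choose) hn []
  have e2 := frozen_ge hch (le_max_right n h2.choose) hj' []
  simp only [List.append_nil] at e1 e2
  rw [e2.symm.trans e1, hn]

lemma limitLabel_incomplete {n : ℕ} {α : List ℕ} {c : C}
    (hn : (f n).label α = some (c, none))
    (hnever : ∀ m j, (f m).label α = some j → j.2 = none) :
    limitLabel f α = some (c, none) := by
  have h2 : ¬ EverComplete f α := by
    rintro ⟨m, j, hm, hj⟩
    rw [hnever m j hm] at hj; simp at hj
  have h : EverDefined f α := ⟨n, by simp [hn]⟩
  rw [limitLabel, dif_neg h2, dif_pos h]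
  obtain ⟨⟨c₀, u₀⟩, hj⟩ := Option.isSome_iff_exists.mp h.choose_spec
  have hu := hnever _ _ hj
  simp at hu
  subst hu
  rw [hj, config_stable hch hj hn]

omit hch in
lemma limitLabel_none {α : List ℕ} (h : ∀ n, (f n).label α = none) :
    limitLabel f α = none := by
  rw [limitLabel, dif_neg, dif_neg]
  · rintro ⟨m, hm⟩; rw [h m] at hm; simp at hm
  · rintro ⟨m, j, hm, -⟩; rw [h m] at hm; simp at hm

omit hch in
lemma limitLabel_complete_inv {α : List ℕ} {c : C} {r : R}
    (h : limitLabel f α = some (c, some r)) : ∃ n, (f n).label α = some (c, some r) := by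
  by_cases h2 : EverComplete f α
  · rw [limitLabel, dif_pos h2] at h
    exact ⟨h2.choose, h⟩
  · by_cases h1 : EverDefined f α
    · rw [limitLabel, dif_neg h2, dif_pos h1] at h
      exact absurd ⟨h1.choose, (c, some r), h, rfl⟩ h2
    · rw [limitLabel, dif_neg h2, dif_neg h1] at h; simp at h

omit hch in
lemma limitLabel_incomplete_inv {α : List ℕ} {c : C}
    (h : limitLabel f α = some (c, none)) :
    (∃ n, (f n).label α = some (c, none)) ∧ ∀ m j, (f m).label α = some j → j.2 = none := by
  by_cases h2 : EverComplete f α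
  · exfalso
    rw [limitLabel, dif_pos h2] at h
    obtain ⟨j, hj, hj2⟩ := h2.choose_spec
    rw [h] at hj
    simp at hj
    rw [← hj] at hj2; simp at hj2
  · have hnever : ∀ m j, (f m).label α = some j → j.2 = none := by
      intro m j hm
      by_contra hne
      exact h2 ⟨m, j, hm, Option.ne_none_iff_isSome.mp hne⟩
    by_cases h1 : EverDefined f α
    · rw [limitLabel, dif_neg h2, dif_pos h1] at h
      exact ⟨⟨h1.choose, h⟩, hnever⟩
    · rw [limitLabel, dif_neg h2, dif_neg h1] at h; simp at h

lemma limitLabel_isSome_iff (α : List ℕ) :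
    (limitLabel f α).isSome ↔ ∃ n, ((f n).label α).isSome := by
  constructor
  · intro hs
    obtain ⟨⟨c, u⟩, hj⟩ := Option.isSome_iff_exists.mp hs
    cases u with
    | some r =>
      obtain ⟨n, hn⟩ := limitLabel_complete_inv hj
      exact ⟨n, by simp [hn]⟩
    | none =>
      obtain ⟨⟨n, hn⟩, -⟩ := limitLabel_incomplete_inv hj
      exact ⟨n, by simp [hn]⟩
  · rintro ⟨n, hn⟩
    obtain ⟨⟨c, u⟩, hj⟩ := Option.isSome_iff_exists.mp hn
    cases u with
    | some r => simp [limitLabel_complete hch hj]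
    | none =>
      by_cases h2 : EverComplete f α
      · obtain ⟨m, ⟨c', u'⟩, hm, hj2⟩ := h2
        obtain ⟨r', rfl⟩ := Option.isSome_iff_exists.mp hj2
        simp [limitLabel_complete hch hm]
      · have hnever : ∀ m j, (f m).label α = some j → j.2 = none := fun m j hm => by
          by_contra hne
          exact h2 ⟨m, j, hm, Option.ne_none_iff_isSome.mp hne⟩
        simp [limitLabel_incomplete hch hj hnever]

noncomputable def limitTree (f : ℕ → OTree (Judg C R))
    (hch : ∀ n, TreeLE (f n) (f (n + 1))) : OTree (Judg C R) where
  label := limitLabel f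
  root_isSome := (limitLabel_isSome_iff hch []).mpr ⟨0, (f 0).root_isSome⟩
  pref α k h := by
    rw [limitLabel_isSome_iff hch] at h ⊢
    obtain ⟨n, hn⟩ := h
    exact ⟨n, (f n).pref α k hn⟩
  sib α k j h hkj := by
    rw [limitLabel_isSome_iff hch] at h ⊢
    obtain ⟨n, hn⟩ := h
    exact ⟨n, (f n).sib α k j hn hkj⟩

@[simp] lemma limitTree_label (α : List ℕ) :
    (limitTree f hch).label α = limitLabel f α := rfl

lemma never_complete_of_frozen_none {n : ℕ} {γ : List ℕ} {c₁ : C}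
    (hb : (f n).label γ = some (c₁, none))
    (hfr : ∀ m, n ≤ m → (f m).label γ = (f n).label γ) :
    ∀ m j, (f m).label γ = some j → j.2 = none := by
  intro m j hm
  obtain ⟨c₂, u₂⟩ := j
  rcases le_total n m with hle | hle
  · rw [hfr m hle, hb] at hm
    simp at hm; simp [hm]
  · by_contra hne
    simp only at hne
    obtain ⟨r₂, rfl⟩ := Option.isSome_iff_exists.mp (Option.ne_none_iff_isSome.mp hne)
    obtain ⟨-, hfz⟩ := (chain_le hch hle).2 γ c₂ (some r₂) hm
    have e := hfz (by simp) []
    simp only [List.append_nil] at e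
    rw [hm, hb] at e
    simp at e

lemma limit_upper (n : ℕ) : TreeLE (f n) (limitTree f hch) := by
  constructor
  · intro α h
    rw [limitTree_label, limitLabel_isSome_iff hch]
    exact ⟨n, h⟩
  · intro α c u h
    constructor
    · cases u with
      | some r => exact ⟨some r, limitLabel_complete hch h⟩
      | none =>
        by_cases hc : ∃ m j, (f m).label α = some j ∧ j.2.isSome
        · obtain ⟨m, ⟨c', u'⟩, hm, hj⟩ := hc
          obtain ⟨r', rfl⟩ := Option.isSome_iff_exists.mp hj
          exact ⟨some r', by
            rw [limitTree_label, limitLabel_complete hch hm,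
              config_stable hch hm h]⟩
        · refine ⟨none, limitLabel_incomplete hch h ?_⟩
          intro m j hm
          by_contra hne
          exact hc ⟨m, j, hm, Option.ne_none_iff_isSome.mp hne⟩
    · intro hu β
      obtain ⟨r, rfl⟩ := Option.isSome_iff_exists.mp hu
      rw [limitTree_label]
      have hfr : ∀ m, n ≤ m → (f m).label (α ++ β) = (f n).label (α ++ β) :=
        fun m hm => frozen_ge hch hm h β
      cases hb : (f n).label (α ++ β) with
      | none =>
        rw [limitLabel_none]
        intro m
        rcases le_total m n with hle | hle
        · by_contra hne
          have := (chain_le hch hle).1 (α ++ β) (Option.ne_none_iff_isSome.mp hne)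
          rw [hb] at this; simp at this
        · rw [hfr m hle, hb]
      | some j =>
        obtain ⟨c₁, u₁⟩ := j
        cases u₁ with
        | some r₁ => rw [limitLabel_complete hch hb]
        | none =>
          rw [limitLabel_incomplete hch hb
            (never_complete_of_frozen_none hch hb hfr)]

lemma limit_least (t' : OTree (Judg C R)) (hub : ∀ n, TreeLE (f n) t') :
    TreeLE (limitTree f hch) t' := by
  constructor
  · intro α h
    rw [limitTree_label, limitLabel_isSome_iff hch] at h
    obtain ⟨n, hn⟩ := h
    exact (hub n).1 α hn
  · intro α c u h
    rw [limitTree_label] at h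
    cases u with
    | none =>
      obtain ⟨⟨n, hn⟩, -⟩ := limitLabel_incomplete_inv h
      obtain ⟨⟨u', h2⟩, -⟩ := (hub n).2 α c none hn
      exact ⟨⟨u', h2⟩, by simp⟩
    | some r =>
      obtain ⟨n, hn⟩ := limitLabel_complete_inv h
      obtain ⟨-, hfz⟩ := (hub n).2 α c (some r) hn
      have ht' : t'.label α = some (c, some r) := by
        have := hfz (by simp) []
        simp only [List.append_nil] at this
        rw [← this, hn]
      refine ⟨⟨some r, ht'⟩, fun _ β => ?_⟩
      have hs := ((limit_upper hch n).2 α c (some r) hn).2 (by simp) β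
      rw [limitTree_label] at hs
      rw [limitTree_label, ← hs, hfz (by simp) β]

lemma limit_isLub : IsLubSeq f (limitTree f hch) :=
  ⟨limit_upper hch, limit_least hch⟩

omit hch in
lemma lub_unique {t t' : OTree (Judg C R)} (h : IsLubSeq f t) (h' : IsLubSeq f t') :
    t = t' :=
  TreeLE.antisymm (h.2 t' h'.1) (h'.2 t h.1)

end Limit
section Dir1
variable {C R : Type}

lemma getElem?_lt {L : Type} {l : List L} {i : ℕ} (h : (l[i]?).isSome) : i < l.length := by
  by_contra hc
  rw [List.getElem?_eq_none (by omega)] at h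
  simp at h

lemma lub_not_finite {f : ℕ → OTree (Judg C R)}
    (hstrict : ∀ n, TreeLT (f n) (f (n + 1)))
    {t : OTree (Judg C R)} (hub : ∀ n, TreeLE (f n) t) : ¬ TreeFinite t := by
  intro hfin
  classical
  set T := hfin.toFinset with hT
  set A : ℕ → Finset (List ℕ) := fun n => T.filter (fun α => ((f n).label α).isSome) with hA
  set B : ℕ → Finset (List ℕ) :=
    fun n => T.filter (fun α => ∃ j, (f n).label α = some j ∧ j.2.isSome) with hB
  have hch : ∀ n, TreeLE (f n) (f (n + 1)) := fun n => (hstrict n).1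
  have hAsub : ∀ n, A n ⊆ A (n + 1) := by
    intro n α hα
    simp only [hA, Finset.mem_filter] at hα ⊢
    exact ⟨hα.1, (hch n).1 α hα.2⟩
  have hBsub : ∀ n, B n ⊆ B (n + 1) := by
    intro n α hα
    simp only [hB, Finset.mem_filter] at hα ⊢
    obtain ⟨hT', ⟨c, u⟩, hj, hu⟩ := hα
    obtain ⟨r, rfl⟩ := Option.isSome_iff_exists.mp hu
    refine ⟨hT', ⟨(c, some r), ?_, rfl⟩⟩
    have := ((hch n).2 α c (some r) hj).2 (by simp) []
    simp only [List.append_nil] at this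
    rw [← this, hj]
  have hmono : ∀ n, (A n).card + (B n).card < (A (n + 1)).card + (B (n + 1)).card := by
    intro n
    by_cases hAeq : A n = A (n + 1)
    · by_cases hBeq : B n = B (n + 1)
      · exfalso
        apply (hstrict n).2
        apply OTree.ext'
        funext α
        cases h1 : (f (n + 1)).label α with
        | none =>
          cases h0 : (f n).label α with
          | none => rfl
          | some j =>
            have := (hch n).1 α (by simp [h0])
            rw [h1] at this; simp at this
        | some j =>
          obtain ⟨c, u'⟩ := j
          have hTmem : α ∈ T := by
            rw [hT]; refine (Set.Finite.mem_toFinset (hs := hfin)).mpr ?_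
            exact (hub (n + 1)).1 α (by simp [h1])
          have hmemA : α ∈ A n := by
            rw [hAeq]
            simp only [hA, Finset.mem_filter]
            exact ⟨hTmem, by simp [h1]⟩
          simp only [hA, Finset.mem_filter] at hmemA
          obtain ⟨⟨c₀, u⟩, h0⟩ := Option.isSome_iff_exists.mp hmemA.2
          have hc0 : c₀ = c := by
            obtain ⟨⟨u₂, h2⟩, -⟩ := (hch n).2 α c₀ u h0
            rw [h1] at h2; simp at h2; exact h2.1.symm
          subst hc0
          cases u with
          | some r =>
            have := ((hch n).2 α c₀ (some r) h0).2 (by simp) []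
            simp only [List.append_nil] at this
            rw [this, h1]
          | none =>
            have hu' : u' = none := by
              by_contra hne
              have hmemB : α ∈ B n := by
                rw [hBeq]
                simp only [hB, Finset.mem_filter]
                exact ⟨hTmem, ⟨(c₀, u'), h1, Option.ne_none_iff_isSome.mp hne⟩⟩
              simp only [hB, Finset.mem_filter] at hmemB
              obtain ⟨-, ⟨cj, uj⟩, hj, hju⟩ := hmemB
              rw [h0] at hj
              simp at hj
              rw [← hj.2] at hju
              simp at hju
            rw [h0, hu']
      · have hss : B n ⊂ B (n + 1) := Finset.ssubset_iff_subset_ne.mpr ⟨hBsub n, hBeq⟩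
        have h1 : (A n).card ≤ (A (n + 1)).card := Finset.card_le_card (hAeq ▸ Finset.Subset.refl _)
        have h2 : (B n).card < (B (n + 1)).card := Finset.card_lt_card hss
        omega
    · have hss : A n ⊂ A (n + 1) := Finset.ssubset_iff_subset_ne.mpr ⟨hAsub n, hAeq⟩
      have h1 : (A n).card < (A (n + 1)).card := Finset.card_lt_card hss
      have h2 : (B n).card ≤ (B (n + 1)).card := Finset.card_le_card (hBsub n)
      omega
  have hsm : StrictMono (fun n => (A n).card + (B n).card) := strictMono_nat_of_lt_succ hmono
  have hle := hsm.le_apply (x := 2 * T.card + 1)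
  have hb1 : (A (2 * T.card + 1)).card ≤ T.card := by
    apply Finset.card_le_card
    simp only [hA]
    exact Finset.filter_subset _ _
  have hb2 : (B (2 * T.card + 1)).card ≤ T.card := by
    apply Finset.card_le_card
    simp only [hB]
    exact Finset.filter_subset _ _
  omega

variable {f : ℕ → OTree (Judg C R)} (hch : ∀ n, TreeLE (f n) (f (n + 1)))
include hch

lemma eventually_eq (γ : List ℕ) :
    ∃ m, ∀ n, m ≤ n → (f n).label γ = limitLabel f γ := by
  cases hL : limitLabel f γ with
  | none =>
    refine ⟨0, fun n _ => ?_⟩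
    cases hn : (f n).label γ with
    | none => rfl
    | some j =>
      exfalso
      have := (limitLabel_isSome_iff hch γ).mpr ⟨n, by simp [hn]⟩
      rw [hL] at this; simp at this
  | some j =>
    obtain ⟨c₁, u₁⟩ := j
    cases u₁ with
    | some r₁ =>
      obtain ⟨m, hmc⟩ := limitLabel_complete_inv hL
      refine ⟨m, fun n hn => ?_⟩
      have := frozen_ge hch hn hmc []
      simp only [List.append_nil] at this
      rw [this, hmc]
    | none =>
      obtain ⟨⟨m, hm⟩, hnever⟩ := limitLabel_incomplete_inv hL
      refine ⟨m, fun n hn => ?_⟩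
      have hs := (chain_le hch hn).1 γ (by simp [hm])
      obtain ⟨⟨c₂, u₂⟩, h2⟩ := Option.isSome_iff_exists.mp hs
      have hu := hnever _ _ h2
      simp only at hu
      subst hu
      rw [h2, config_stable hch h2 hm]

omit hch in
lemma rule_bound {Rules : Set (List (C × R) × (C × R))} {ps : List (Judg C R)} {c : C} {b : ℕ}
    (hrule : (ps, ((c : C), (none : Option R))) ∈ RulesQ Rules)
    (hb : ∀ js res, (js, (c, res)) ∈ Rules → js.length ≤ b) : ps.length ≤ b := by
  rcases hrule with ⟨c', he⟩ | ⟨js, c', res, -, he⟩ | ⟨js, c', res, i, hi, u, hmem, he⟩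
  · simp only [Prod.mk.injEq] at he
    rw [he.1]
    simp
  · simp only [Prod.mk.injEq] at he
    exact absurd he.2.2 (by simp)
  · simp only [Prod.mk.injEq] at he
    obtain ⟨hps, hc, -⟩ := he
    subst hc
    rw [hps]
    have := hb js res hmem
    simp only [List.length_append, List.length_map, List.length_take, List.length_singleton]
    omega

lemma lub_wellFormed (hfin : ∀ n, TreeFinite (f n)) : WellFormed (limitTree f hch) := by
  intro α c r h
  rw [limitTree_label] at h
  obtain ⟨n, hn⟩ := limitLabel_complete_inv h
  have hfr := ((limit_upper hch n).2 α c (some r) hn).2 (by simp)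
  have hset : {β | ((limitTree f hch).label (α ++ β)).isSome}
      = (fun β => α ++ β) ⁻¹' {γ | ((f n).label γ).isSome} := by
    ext β
    simp only [Set.mem_setOf_eq, Set.mem_preimage]
    rw [← hfr β]
  rw [hset]
  exact Set.Finite.preimage
    (Set.injOn_of_injective (fun a b hab => List.append_cancel_left hab)) (hfin n)

lemma lub_isPET {Rules : Set (List (C × R) × (C × R))}
    (hpet : ∀ n, IsPET Rules (f n)) (hbp : BP Rules) : IsPET Rules (limitTree f hch) := by
  intro α l h
  rw [limitTree_label] at h
  obtain ⟨c, u⟩ := l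
  cases u with
  | some r =>
    obtain ⟨n, hn⟩ := limitLabel_complete_inv h
    obtain ⟨ps, hps, hrule⟩ := hpet n α _ hn
    refine ⟨ps, fun i => ?_, hrule⟩
    have hfr := ((limit_upper hch n).2 α c (some r) hn).2 (by simp) [i]
    rw [limitTree_label] at hfr
    rw [limitTree_label, ← hfr, hps i]
  | none =>
    obtain ⟨⟨n₀, hn₀⟩, hnever⟩ := limitLabel_incomplete_inv h
    obtain ⟨b, hb⟩ := hbp c
    have hstab : ∀ n, n₀ ≤ n → (f n).label α = some (c, none) := by
      intro n hn
      have hs := (chain_le hch hn).1 α (by simp [hn₀])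
      obtain ⟨⟨c₁, u₁⟩, h1⟩ := Option.isSome_iff_exists.mp hs
      have hu := hnever _ _ h1
      simp only at hu
      subst hu
      rw [h1, config_stable hch h1 hn₀]
    have hbound : ∀ n i, n₀ ≤ n → ((f n).label (α ++ [i])).isSome → i < b := by
      intro n i hn hi
      obtain ⟨ps, hps, hrule⟩ := hpet n α _ (hstab n hn)
      have hlt : i < ps.length := getElem?_lt (by rw [← hps i]; exact hi)
      have hlen := rule_bound hrule hb
      omega
    choose m hm using fun i : ℕ => eventually_eq hch (α ++ [i])
    set N := n₀ + (Finset.range b).sup m with hN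
    have hn₀N : n₀ ≤ N := Nat.le_add_right _ _
    have hchild : ∀ i, limitLabel f (α ++ [i]) = (f N).label (α ++ [i]) := by
      intro i
      by_cases hib : i < b
      · have hmi : m i ≤ N := le_trans (Finset.le_sup (Finset.mem_range.mpr hib))
          (Nat.le_add_left _ _)
        exact (hm i N hmi).symm
      · have h1 : (f N).label (α ++ [i]) = none := by
          cases hs : (f N).label (α ++ [i]) with
          | none => rfl
          | some j => exact absurd (hbound N i hn₀N (by simp [hs])) hib
        rw [h1]
        cases hL : limitLabel f (α ++ [i]) with
        | none => rfl
        | some j =>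
          exfalso
          have hsome := (limitLabel_isSome_iff hch (α ++ [i])).mp (by simp [hL])
          obtain ⟨n, hn⟩ := hsome
          have hs2 : ((f (max n n₀)).label (α ++ [i])).isSome :=
            (chain_le hch (le_max_left n n₀)).1 _ hn
          exact hib (hbound (max n n₀) i (le_max_right n n₀) hs2)
    obtain ⟨ps, hps, hrule⟩ := hpet N α _ (hstab N hn₀N)
    refine ⟨ps, fun i => ?_, hrule⟩
    rw [limitTree_label, hchild i, hps i]

end Dir1
section Dir2
variable {C R : Type} {Rules : Set (List (C × R) × (C × R))}

def Kept (t : OTree (Judg C R)) (n : ℕ) (α : List ℕ) : Prop :=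
  (t.label α).isSome ∧
    (α.length ≤ n ∨ ∃ β c r, β <+: α ∧ β.length ≤ n ∧ t.label β = some (c, some r))

lemma Kept.prefOf {t : OTree (Judg C R)} {n : ℕ} {α : List ℕ} {k : ℕ}
    (h : Kept t n (α ++ [k])) : Kept t n α := by
  obtain ⟨hs, hd⟩ := h
  refine ⟨t.pref α k hs, ?_⟩
  rcases hd with hl | ⟨β, c, r, hpre, hlen, hcom⟩
  · left; simp only [List.length_append, List.length_singleton] at hl; omega
  · rcases List.prefix_concat_iff.mp hpre with rfl | hpre'
    · left
      simp only [List.length_append, List.length_singleton] at hlen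
      omega
    · right; exact ⟨β, c, r, hpre', hlen, hcom⟩

lemma Kept.sibOf {t : OTree (Judg C R)} {n : ℕ} {α : List ℕ} {k j : ℕ}
    (h : Kept t n (α ++ [k])) (hj : j ≤ k) : Kept t n (α ++ [j]) := by
  obtain ⟨hs, hd⟩ := h
  refine ⟨t.sib α k j hs hj, ?_⟩
  rcases hd with hl | ⟨β, c, r, hpre, hlen, hcom⟩
  · left; simpa using hl
  · rcases List.prefix_concat_iff.mp hpre with rfl | hpre'
    · left
      simp only [List.length_append, List.length_singleton] at hlen ⊢
      omega
    · right; exact ⟨β, c, r, hpre'.trans (List.prefix_append α [j]), hlen, hcom⟩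

lemma Kept.mono {t : OTree (Judg C R)} {n m : ℕ} {α : List ℕ}
    (h : Kept t n α) (hnm : n ≤ m) : Kept t m α := by
  obtain ⟨hs, hd⟩ := h
  refine ⟨hs, ?_⟩
  rcases hd with hl | ⟨β, c, r, hpre, hlen, hcom⟩
  · exact Or.inl (hl.trans hnm)
  · exact Or.inr ⟨β, c, r, hpre, hlen.trans hnm, hcom⟩

lemma kept_subtree {t : OTree (Judg C R)} {n : ℕ} {α γ : List ℕ} {c : C} {r : R}
    (hc : t.label α = some (c, some r)) (hk : Kept t n α)
    (hs : (t.label (α ++ γ)).isSome) : Kept t n (α ++ γ) := by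
  refine ⟨hs, Or.inr ?_⟩
  rcases hk.2 with hl | ⟨β, c', r', hpre, hlen, hcom⟩
  · exact ⟨α, c, r, List.prefix_append α γ, hl, hc⟩
  · exact ⟨β, c', r', hpre.trans (List.prefix_append α γ), hlen, hcom⟩

lemma kept_all {t : OTree (Judg C R)} {α : List ℕ} (hs : (t.label α).isSome) :
    Kept t α.length α := ⟨hs, Or.inl le_rfl⟩

open Classical in
noncomputable def trunc (t : OTree (Judg C R)) (n : ℕ) : OTree (Judg C R) where
  label α := if Kept t n α then t.label α else none
  root_isSome := by
    show (if Kept t n [] then t.label [] else none).isSome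
    rw [if_pos ⟨t.root_isSome, Or.inl (by simp)⟩]
    exact t.root_isSome
  pref α k h := by
    replace h : (if Kept t n (α ++ [k]) then t.label (α ++ [k]) else none).isSome := h
    show (if Kept t n α then t.label α else none).isSome
    have hk : Kept t n (α ++ [k]) := by
      by_contra hk
      rw [if_neg hk] at h; simp at h
    rw [if_pos hk.prefOf]
    exact hk.prefOf.1
  sib α k j h hj := by
    replace h : (if Kept t n (α ++ [k]) then t.label (α ++ [k]) else none).isSome := h
    show (if Kept t n (α ++ [j]) then t.label (α ++ [j]) else none).isSome
    have hk : Kept t n (α ++ [k]) := by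
      by_contra hk
      rw [if_neg hk] at h; simp at h
    rw [if_pos (hk.sibOf hj)]
    exact (hk.sibOf hj).1

lemma trunc_label_eq {t : OTree (Judg C R)} {n : ℕ} {α : List ℕ} (h : Kept t n α) :
    (trunc t n).label α = t.label α := if_pos h

lemma trunc_label_none {t : OTree (Judg C R)} {n : ℕ} {α : List ℕ} (h : ¬ Kept t n α) :
    (trunc t n).label α = none := if_neg h

lemma trunc_isSome_iff (t : OTree (Judg C R)) (n : ℕ) (α : List ℕ) :
    ((trunc t n).label α).isSome ↔ Kept t n α := by
  by_cases h : Kept t n α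
  · rw [trunc_label_eq h]
    simp [h.1, h]
  · rw [trunc_label_none h]
    simp [h]

lemma trunc_subtree_eq {t : OTree (Judg C R)} {n : ℕ} {α : List ℕ} {c : C} {r : R}
    (hc : t.label α = some (c, some r)) (hk : Kept t n α) (β : List ℕ) :
    (trunc t n).label (α ++ β) = t.label (α ++ β) := by
  by_cases hs : (t.label (α ++ β)).isSome
  · exact trunc_label_eq (kept_subtree hc hk hs)
  · rw [trunc_label_none (fun hk' => hs hk'.1), Option.not_isSome_iff_eq_none.mp hs]

lemma trunc_isPET {t : OTree (Judg C R)} (ht : IsPET Rules t) (n : ℕ) :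
    IsPET Rules (trunc t n) := by
  intro α l hl
  have hk : Kept t n α := by
    by_contra hk
    rw [trunc_label_none hk] at hl; simp at hl
  rw [trunc_label_eq hk] at hl
  obtain ⟨c, u⟩ := l
  obtain ⟨ps, hps, hrule⟩ := ht α _ hl
  by_cases hgood : α.length < n ∨
      (∃ β c' r', β <+: α ∧ β.length ≤ n ∧ t.label β = some (c', some r')) ∨
      (u.isSome ∧ α.length ≤ n)
  · have heq : ∀ i, (trunc t n).label (α ++ [i]) = t.label (α ++ [i]) := by
      intro i
      by_cases hs : (t.label (α ++ [i])).isSome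
      · apply trunc_label_eq
        refine ⟨hs, ?_⟩
        rcases hgood with hlt | hpre | ⟨hu, hle⟩
        · left; simp only [List.length_append, List.length_singleton]; omega
        · obtain ⟨β, c', r', hp, hlen, hcom⟩ := hpre
          exact Or.inr ⟨β, c', r', hp.trans (List.prefix_append α [i]), hlen, hcom⟩
        · obtain ⟨r, rfl⟩ := Option.isSome_iff_exists.mp hu
          exact Or.inr ⟨α, c, r, List.prefix_append α [i], hle, hl⟩
      · rw [trunc_label_none (fun hk' => hs hk'.1), Option.not_isSome_iff_eq_none.mp hs]
    exact ⟨ps, fun i => (heq i).trans (hps i), hrule⟩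
  · have h1 : ¬ α.length < n := fun hh => hgood (Or.inl hh)
    have h2 : ¬ ∃ β c' r', β <+: α ∧ β.length ≤ n ∧ t.label β = some (c', some r') :=
      fun hh => hgood (Or.inr (Or.inl hh))
    have h3 : ¬ (u.isSome ∧ α.length ≤ n) := fun hh => hgood (Or.inr (Or.inr hh))
    have hαn : α.length ≤ n := hk.2.resolve_right h2
    have hu : u = none := by
      cases u with
      | none => rfl
      | some r => exact absurd ⟨by simp, hαn⟩ h3
    subst hu
    refine ⟨[], fun i => ?_, Or.inl ⟨c, rfl⟩⟩
    simp only [List.getElem?_nil]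
    apply trunc_label_none
    rintro ⟨hs, hd⟩
    rcases hd with hl' | ⟨β, c', r', hp, hlen, hcom⟩
    · simp only [List.length_append, List.length_singleton] at hl'; omega
    · have hβα : β <+: α := by
        apply List.prefix_of_prefix_length_le hp (List.prefix_append α [i])
        omega
      exact h2 ⟨β, c', r', hβα, hlen, hcom⟩

lemma depth_finite {t : OTree (Judg C R)} (ht : IsPET Rules t) :
    ∀ n, {α | (t.label α).isSome ∧ α.length ≤ n}.Finite := by
  intro n
  induction n with
  | zero =>
    apply Set.Finite.subset (Set.finite_singleton ([] : List ℕ))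
    rintro α ⟨-, hl⟩
    simpa using List.eq_nil_of_length_eq_zero (Nat.le_zero.mp hl)
  | succ n ih =>
    have hchf : ∀ γ : List ℕ, {δ | ∃ i, δ = γ ++ [i] ∧ (t.label δ).isSome}.Finite := by
      intro γ
      by_cases hγ : (t.label γ).isSome
      · obtain ⟨j, hj⟩ := Option.isSome_iff_exists.mp hγ
        obtain ⟨ps, hps, -⟩ := ht γ j hj
        apply Set.Finite.subset ((Set.finite_Iio ps.length).image (fun i => γ ++ [i]))
        rintro δ ⟨i, rfl, hs⟩
        exact ⟨i, getElem?_lt (by rw [← hps i]; exact hs), rfl⟩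
      · apply Set.Finite.subset Set.finite_empty
        rintro δ ⟨i, rfl, hs⟩
        exact hγ (t.pref γ i hs)
    apply Set.Finite.subset (ih.union (Set.Finite.biUnion ih (fun γ _ => hchf γ)))
    rintro α ⟨hs, hl⟩
    rcases Nat.lt_or_ge α.length (n + 1) with hlt | hge
    · exact Or.inl ⟨hs, by omega⟩
    · right
      have hne : α ≠ [] := by
        intro h; rw [h] at hge; simp at hge
      have hm1 : α.dropLast ∈ {α : List ℕ | (t.label α).isSome ∧ α.length ≤ n} := by
        refine ⟨t.pref _ (α.getLast hne) ?_, ?_⟩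
        · rw [List.dropLast_append_getLast hne]; exact hs
        · simp only [List.length_dropLast]; omega
      have hm2 : α ∈ {δ | ∃ i, δ = α.dropLast ++ [i] ∧ (t.label δ).isSome} :=
        ⟨α.getLast hne, (List.dropLast_append_getLast hne).symm, hs⟩
      exact Set.mem_biUnion hm1 hm2

lemma trunc_finite {t : OTree (Judg C R)} (ht : IsPET Rules t) (hwf : WellFormed t) (n : ℕ) :
    TreeFinite (trunc t n) := by
  have hsub : {α | ((trunc t n).label α).isSome} ⊆
      {α | (t.label α).isSome ∧ α.length ≤ n} ∪
      ⋃ β ∈ {β : List ℕ | (∃ c r, t.label β = some (c, some r)) ∧ β.length ≤ n},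
        (fun γ => β ++ γ) '' {γ | (t.label (β ++ γ)).isSome} := by
    intro α hα
    rw [Set.mem_setOf_eq, trunc_isSome_iff] at hα
    obtain ⟨hs, hd⟩ := hα
    rcases hd with hl | ⟨β, c, r, hpre, hlen, hcom⟩
    · exact Or.inl ⟨hs, hl⟩
    · right
      have hm1 : β ∈ {β : List ℕ | (∃ c r, t.label β = some (c, some r)) ∧ β.length ≤ n} :=
        ⟨⟨c, r, hcom⟩, hlen⟩
      obtain ⟨γ, rfl⟩ := hpre
      exact Set.mem_biUnion hm1 ⟨γ, hs, rfl⟩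
  apply Set.Finite.subset _ hsub
  apply Set.Finite.union (depth_finite ht n)
  apply Set.Finite.biUnion
  · apply Set.Finite.subset (depth_finite ht n)
    rintro β ⟨⟨c, r, hcom⟩, hlen⟩
    exact ⟨by simp [hcom], hlen⟩
  · rintro β ⟨⟨c, r, hcom⟩, -⟩
    exact (hwf β c r hcom).image _

lemma kept_succ {t : OTree (Judg C R)} {n : ℕ}
    (h : ∀ α, Kept t (n + 1) α → Kept t n α) :
    ∀ α, Kept t (n + 2) α → Kept t (n + 1) α := by
  intro α hα
  obtain ⟨hs, hd⟩ := hα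
  have key : ∀ γ : List ℕ, (t.label γ).isSome → γ.length = n + 2 →
      ∃ δ c' r', δ <+: γ ∧ δ.length ≤ n ∧ t.label δ = some (c', some r') := by
    intro γ hγs hγl
    have hne : γ ≠ [] := by
      intro hh; rw [hh] at hγl; simp at hγl
    have hpar : (t.label γ.dropLast).isSome :=
      t.pref _ (γ.getLast hne) (by rw [List.dropLast_append_getLast hne]; exact hγs)
    have hparl : γ.dropLast.length = n + 1 := by
      simp only [List.length_dropLast, hγl]
      omega
    have hk : Kept t n γ.dropLast := h _ ⟨hpar, Or.inl (by omega)⟩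
    rcases hk.2 with hl | ⟨δ, c', r', hpre, hlen, hcom⟩
    · omega
    · exact ⟨δ, c', r', hpre.trans (List.dropLast_prefix γ), hlen, hcom⟩
  refine ⟨hs, ?_⟩
  rcases hd with hl | ⟨β, c, r, hpre, hlen, hcom⟩
  · rcases Nat.lt_or_ge α.length (n + 2) with hlt | hge
    · left; omega
    · have hal : α.length = n + 2 := by omega
      obtain ⟨δ, c', r', hpre', hlen', hcom'⟩ := key α hs hal
      exact Or.inr ⟨δ, c', r', hpre', by omega, hcom'⟩
  · rcases Nat.lt_or_ge β.length (n + 2) with hlt | hge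
    · exact Or.inr ⟨β, c, r, hpre, by omega, hcom⟩
    · have hbl : β.length = n + 2 := by omega
      obtain ⟨δ, c', r', hpre', hlen', hcom'⟩ := key β (by simp [hcom]) hbl
      exact Or.inr ⟨δ, c', r', hpre'.trans hpre, by omega, hcom'⟩

lemma kept_step_all {t : OTree (Judg C R)} {n : ℕ}
    (h : ∀ α, Kept t (n + 1) α → Kept t n α) :
    ∀ k α, Kept t (n + k + 1) α → Kept t (n + k) α := by
  intro k
  induction k with
  | zero => exact h
  | succ k ih => exact kept_succ ih

lemma kept_down {t : OTree (Judg C R)} {n : ℕ}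
    (h : ∀ α, Kept t (n + 1) α → Kept t n α) :
    ∀ k α, Kept t (n + k) α → Kept t n α := by
  intro k
  induction k with
  | zero => exact fun α => id
  | succ k ih => exact fun α hα => ih α (kept_step_all h k α hα)

lemma trunc_ne {t : OTree (Judg C R)} (ht : IsPET Rules t) (hwf : WellFormed t)
    (hinf : ¬ TreeFinite t) (n : ℕ) : trunc t n ≠ trunc t (n + 1) := by
  intro heq
  have hkk : ∀ α, Kept t (n + 1) α → Kept t n α := by
    intro α hα
    have h1 : ((trunc t (n + 1)).label α).isSome := (trunc_isSome_iff _ _ _).mpr hα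
    rw [← heq] at h1
    exact (trunc_isSome_iff _ _ _).mp h1
  apply hinf
  apply Set.Finite.subset (trunc_finite ht hwf n)
  intro α hα
  rw [Set.mem_setOf_eq] at hα
  have h1 : Kept t (n + (max n α.length - n)) α := by
    rw [Nat.add_sub_cancel' (le_max_left _ _)]
    exact (kept_all hα).mono (le_max_right _ _)
  have h2 : Kept t n α := kept_down hkk _ α h1
  rw [Set.mem_setOf_eq, trunc_isSome_iff]
  exact h2

lemma trunc_le_succ {t : OTree (Judg C R)} (n : ℕ) : TreeLE (trunc t n) (trunc t (n + 1)) := by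
  constructor
  · intro α h
    rw [trunc_isSome_iff] at h ⊢
    exact h.mono (Nat.le_succ n)
  · intro α c u h
    have hk : Kept t n α := by
      by_contra hk
      rw [trunc_label_none hk] at h; simp at h
    rw [trunc_label_eq hk] at h
    refine ⟨⟨u, by rw [trunc_label_eq (hk.mono (Nat.le_succ n)), h]⟩, ?_⟩
    intro hu β
    obtain ⟨r, rfl⟩ := Option.isSome_iff_exists.mp hu
    rw [trunc_subtree_eq h hk β, trunc_subtree_eq h (hk.mono (Nat.le_succ n)) β]

lemma trunc_le_t {t : OTree (Judg C R)} (n : ℕ) : TreeLE (trunc t n) t := by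
  constructor
  · intro α h
    rw [trunc_isSome_iff] at h
    exact h.1
  · intro α c u h
    have hk : Kept t n α := by
      by_contra hk
      rw [trunc_label_none hk] at h; simp at h
    rw [trunc_label_eq hk] at h
    refine ⟨⟨u, h⟩, ?_⟩
    intro hu β
    obtain ⟨r, rfl⟩ := Option.isSome_iff_exists.mp hu
    rw [trunc_subtree_eq h hk β]

lemma trunc_isLub {t : OTree (Judg C R)} : IsLubSeq (fun n => trunc t n) t := by
  refine ⟨fun n => trunc_le_t n, ?_⟩
  intro t' hub
  constructor
  · intro α hα
    have hk : Kept t α.length α := kept_all hα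
    exact (hub α.length).1 α ((trunc_isSome_iff _ _ _).mpr hk)
  · intro α c u h
    have hk : Kept t α.length α := kept_all (by simp [h])
    have htr : (trunc t α.length).label α = some (c, u) := by
      rw [trunc_label_eq hk, h]
    obtain ⟨⟨u', hu'⟩, -⟩ := (hub α.length).2 α c u htr
    refine ⟨⟨u', hu'⟩, ?_⟩
    intro hu β
    obtain ⟨r, rfl⟩ := Option.isSome_iff_exists.mp hu
    have hfz := ((hub α.length).2 α c (some r) htr).2 (by simp) β
    rw [← hfz, trunc_subtree_eq h hk β]

end Dir2

/-- lubs of strictly increasing sequences of finite partial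
    evaluation trees are exactly the well-formed infinite partial evaluation
    trees. -/
theorem wf_infinite_iff_lub_of_strict_chain {C R : Type}
    (Rules : Set (List (C × R) × (C × R))) (hbp : BP Rules) :
    (∀ f : ℕ → OTree (Judg C R),
      (∀ n, IsPET Rules (f n)) → (∀ n, TreeFinite (f n)) →
      (∀ n, TreeLT (f n) (f (n + 1))) →
      ∀ t : OTree (Judg C R), IsLubSeq f t →
        ¬ TreeFinite t ∧ WellFormed t ∧ IsPET Rules t) ∧
    (∀ t : OTree (Judg C R), IsPET Rules t → WellFormed t → ¬ TreeFinite t →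
      ∃ f : ℕ → OTree (Judg C R), (∀ n, IsPET Rules (f n)) ∧
        (∀ n, TreeFinite (f n)) ∧ (∀ n, TreeLT (f n) (f (n + 1))) ∧
        IsLubSeq f t) := by
  constructor
  · intro f hpet hfin hstrict t hlub
    have hch : ∀ n, TreeLE (f n) (f (n + 1)) := fun n => (hstrict n).1
    have hteq : t = limitTree f hch := lub_unique hlub (limit_isLub hch)
    refine ⟨lub_not_finite hstrict hlub.1, ?_, ?_⟩
    · rw [hteq]
      exact lub_wellFormed hch hfin
    · rw [hteq]
      exact lub_isPET hch hpet hbp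
  · intro t hpet hwf hinf
    exact ⟨fun n => trunc t n, fun n => trunc_isPET hpet n,
      fun n => trunc_finite hpet hwf n,
      fun n => ⟨trunc_le_succ n, trunc_ne hpet hwf hinf n⟩, trunc_isLub⟩
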